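/- Let g : [-1,1] → ℝ be C^{d+1} with at least d+1 distinct zeros in [-1,1] and max_{t ∈ [-1,1]} |g(t)| = m. Then there exists t_0 ∈ [-1,1] with |g^{(d+1)}(t_0)| ≥ m·(d+1)!/2^{d+1}. -/

import Mathlib

open Set Polynomial

private lemma uD : UniqueDiffOn ℝ (Set.Icc (-1 : ℝ) 1) :=
  uniqueDiffOn_Icc (by norm_num)

/-- Iterated Rolle: a `C^n` function on `[-1,1]` with `n+1` distinct zeros has a point where
the `n`-th derivative (within `Icc`) vanishes. -/
private lemma iterated_rolle (n : ℕ) :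
    ∀ f : ℝ → ℝ, ContDiffOn ℝ n f (Set.Icc (-1 : ℝ) 1) →
    ∀ S : Finset ℝ, (S : Set ℝ) ⊆ Set.Icc (-1 : ℝ) 1 → n + 1 ≤ S.card →
    (∀ t ∈ S, f t = 0) →
    ∃ ξ ∈ Set.Icc (-1 : ℝ) 1, iteratedDerivWithin n f (Set.Icc (-1 : ℝ) 1) ξ = 0 := by
  induction n with
  | zero =>
    intro f _ S hS hcard hzero
    obtain ⟨t, ht⟩ := Finset.card_pos.1 (Nat.lt_of_lt_of_le Nat.zero_lt_one hcard)
    exact ⟨t, hS ht, by simpa [iteratedDerivWithin_zero] using hzero t ht⟩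
  | succ n IH =>
    intro f hf S hS hcard hzero
    set I := Set.Icc (-1 : ℝ) 1 with hI
    -- order the zeros
    set e : Fin S.card ≃o S := S.orderIsoOfFin rfl with he
    have hmem : ∀ i : Fin S.card, ((e i : ℝ)) ∈ S := fun i => (e i).2
    have hlt : ∀ i j : Fin S.card, i < j → ((e i : ℝ)) < ((e j : ℝ)) := by
      intro i j hij
      exact_mod_cast e.strictMono hij
    -- Rolle on each consecutive pair
    have key : ∀ i : Fin (n + 1), ∃ c : ℝ,
        c ∈ Set.Ioo ((e ⟨i, by omega⟩ : ℝ)) ((e ⟨i + 1, by omega⟩ : ℝ)) ∧ deriv f c = 0 := by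
      intro i
      have hab : ((e ⟨i, by omega⟩ : ℝ)) < ((e ⟨i + 1, by omega⟩ : ℝ)) :=
        hlt _ _ (by simp [Fin.lt_def])
      have hcont : ContinuousOn f (Set.Icc ((e ⟨i, by omega⟩ : ℝ)) ((e ⟨i + 1, by omega⟩ : ℝ))) := by
        refine hf.continuousOn.mono ?_
        intro x hx
        have h1 := hS (hmem ⟨i, by omega⟩)
        have h2 := hS (hmem ⟨i + 1, by omega⟩)
        exact ⟨le_trans h1.1 hx.1, le_trans hx.2 h2.2⟩
      have heq : f ((e ⟨i, by omega⟩ : ℝ)) = f ((e ⟨i + 1, by omega⟩ : ℝ)) := by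
        rw [hzero _ (hmem _), hzero _ (hmem _)]
      obtain ⟨c, hc1, hc2⟩ := exists_deriv_eq_zero hab hcont heq
      exact ⟨c, hc1, hc2⟩
    choose c hc1 hc2 using key
    have hcI : ∀ i, c i ∈ Set.Ioo (-1 : ℝ) 1 := by
      intro i
      have h1 := hS (hmem ⟨(i : ℕ), by omega⟩)
      have h2 := hS (hmem ⟨(i : ℕ) + 1, by omega⟩)
      exact ⟨lt_of_le_of_lt h1.1 (hc1 i).1, lt_of_lt_of_le (hc1 i).2 h2.2⟩
    -- derivWithin = deriv at interior points
    have hdw : ∀ i, derivWithin f I (c i) = 0 := by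
      intro i
      rw [derivWithin_of_mem_nhds (Icc_mem_nhds (hcI i).1 (hcI i).2)]
      exact hc2 i
    -- c is strictly monotone hence injective
    have hcmono : StrictMono c := by
      intro i j hij
      have h1 : (c i) < ((e ⟨(i : ℕ) + 1, by omega⟩ : ℝ)) := (hc1 i).2
      have h2 : ((e ⟨(i : ℕ) + 1, by omega⟩ : ℝ)) ≤ ((e ⟨(j : ℕ), by omega⟩ : ℝ)) := by
        have hle : (⟨(i : ℕ) + 1, by omega⟩ : Fin S.card) ≤ ⟨(j : ℕ), by omega⟩ :=
          Fin.mk_le_mk.mpr hij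
        exact_mod_cast Subtype.coe_le_coe.2 (e.monotone hle)
      exact lt_of_lt_of_le (lt_of_lt_of_le h1 h2) (le_of_lt (hc1 j).1)
    set S' : Finset ℝ := Finset.image c Finset.univ with hS'
    have hS'card : n + 1 ≤ S'.card := by
      rw [hS', Finset.card_image_of_injective _ hcmono.injective, Finset.card_univ, Fintype.card_fin]
    have hS'sub : (S' : Set ℝ) ⊆ I := by
      intro x hx
      simp only [hS', Finset.coe_image, Finset.coe_univ, Set.image_univ] at hx
      obtain ⟨i, rfl⟩ := hx
      exact ⟨le_of_lt (hcI i).1, le_of_lt (hcI i).2⟩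
    have hS'zero : ∀ t ∈ S', derivWithin f I t = 0 := by
      intro t ht
      simp only [hS', Finset.mem_image, Finset.mem_univ, true_and] at ht
      obtain ⟨i, rfl⟩ := ht
      exact hdw i
    have hf' : ContDiffOn ℝ n (derivWithin f I) I := by
      refine hf.derivWithin uD ?_
      exact_mod_cast le_refl ((n : ℕ∞) + 1)
    obtain ⟨ξ, hξI, hξ⟩ := IH (derivWithin f I) hf' S' hS'sub hS'card hS'zero
    refine ⟨ξ, hξI, ?_⟩
    rw [iteratedDerivWithin_succ']
    exact hξ

/-- Evaluation of iterated derivatives within a set for polynomials. -/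
private lemma iteratedDerivWithin_polynomial (p : Polynomial ℝ) (n : ℕ) :
    ∀ x ∈ Set.Icc (-1 : ℝ) 1,
      iteratedDerivWithin n (fun t => p.eval t) (Set.Icc (-1 : ℝ) 1) x =
        (Polynomial.derivative^[n] p).eval x := by
  induction n with
  | zero => intro x _; simp [iteratedDerivWithin_zero]
  | succ n IH =>
    intro x hx
    rw [iteratedDerivWithin_succ]
    have h1 : derivWithin (iteratedDerivWithin n (fun t => p.eval t) (Set.Icc (-1 : ℝ) 1))
        (Set.Icc (-1 : ℝ) 1) x
        = derivWithin (fun t => (Polynomial.derivative^[n] p).eval t) (Set.Icc (-1 : ℝ) 1) x := by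
      apply derivWithin_congr
      · intro y hy; exact IH y hy
      · exact IH x hx
    rw [h1, ((Polynomial.derivative^[n] p).differentiableAt).derivWithin
      (uD.uniqueDiffWithinAt hx), Function.iterate_succ_apply']
    exact Polynomial.deriv (p := Polynomial.derivative^[n] p)

theorem one_dim_rigidity
    (d : ℕ) (g : ℝ → ℝ) (m : ℝ)
    (hg : ContDiffOn ℝ (d + 1) g (Set.Icc (-1 : ℝ) 1))
    (Z : Finset ℝ) (hZ : (Z : Set ℝ) ⊆ Set.Icc (-1 : ℝ) 1)
    (hZcard : d + 1 ≤ Z.card) (hZzero : ∀ t ∈ Z, g t = 0)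
    (hbound : ∀ t ∈ Set.Icc (-1 : ℝ) 1, |g t| ≤ m)
    (hattain : ∃ t ∈ Set.Icc (-1 : ℝ) 1, |g t| = m) :
    ∃ t₀ ∈ Set.Icc (-1 : ℝ) 1,
      m * (Nat.factorial (d + 1) : ℝ) / 2 ^ (d + 1) ≤
        |iteratedDerivWithin (d + 1) g (Set.Icc (-1 : ℝ) 1) t₀| := by
  obtain ⟨t₁, ht₁I, ht₁m⟩ := hattain
  have hm0 : 0 ≤ m := ht₁m ▸ abs_nonneg _
  rcases eq_or_lt_of_le hm0 with hm | hm
  · exact ⟨t₁, ht₁I, by rw [← hm]; simpa using abs_nonneg _⟩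
  -- pick d+1 zeros
  obtain ⟨X, hXZ, hXcard⟩ := Finset.exists_subset_card_eq (show d + 1 ≤ Z.card from hZcard)
  have hXI : (X : Set ℝ) ⊆ (Set.Icc (-1 : ℝ) 1) := fun x hx => hZ (hXZ hx)
  have hXzero : ∀ t ∈ X, g t = 0 := fun t ht => hZzero t (hXZ ht)
  have ht₁X : t₁ ∉ X := by
    intro h
    rw [hXzero t₁ h] at ht₁m
    simp at ht₁m
    exact absurd ht₁m.symm (ne_of_gt hm)
  set p : Polynomial ℝ := ∏ x ∈ X, (Polynomial.X - Polynomial.C x) with hp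
  set ω : ℝ → ℝ := fun t => p.eval t with hω
  have hωprod : ∀ t, ω t = ∏ x ∈ X, (t - x) := by
    intro t; simp [hω, hp, Polynomial.eval_prod]
  have hωt₁ : ω t₁ ≠ 0 := by
    rw [hωprod]
    exact Finset.prod_ne_zero_iff.2 fun x hx => sub_ne_zero.2 (fun h => ht₁X (h ▸ hx))
  set c : ℝ := g t₁ / ω t₁ with hc
  set φ : ℝ → ℝ := g - c • ω with hφ
  have hωcd : ContDiff ℝ (↑(d + 1)) ω := by
    rw [funext hωprod]
    exact contDiff_prod fun x _ => contDiff_id.sub contDiff_const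
  have hg' : ContDiffOn ℝ ((d + 1 : ℕ) : ℕ∞) g (Set.Icc (-1 : ℝ) 1) :=
    hg.of_le (by norm_cast)
  have hωI : ContDiffOn ℝ ((d + 1 : ℕ) : ℕ∞) ω (Set.Icc (-1 : ℝ) 1) := hωcd.contDiffOn
  have hcω : ContDiffOn ℝ ((d + 1 : ℕ) : ℕ∞) (c • ω) (Set.Icc (-1 : ℝ) 1) := by
    exact (hωcd.const_smul c).contDiffOn
  have hφcd : ContDiffOn ℝ ((d + 1 : ℕ) : ℕ∞) φ (Set.Icc (-1 : ℝ) 1) := hg'.sub hcω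
  -- zeros of φ
  set S : Finset ℝ := insert t₁ X with hSdef
  have hScard : d + 2 ≤ S.card := by
    rw [hSdef, Finset.card_insert_of_notMem ht₁X, hXcard]
  have hSsub : (S : Set ℝ) ⊆ (Set.Icc (-1 : ℝ) 1) := by
    intro x hx
    rw [hSdef] at hx
    simp only [Finset.coe_insert, Set.mem_insert_iff] at hx
    rcases hx with rfl | hx
    · exact ht₁I
    · exact hXI hx
  have hSzero : ∀ t ∈ S, φ t = 0 := by
    intro t ht
    rw [hSdef, Finset.mem_insert] at ht
    rcases ht with rfl | ht
    · simp only [hφ, Pi.sub_apply, Pi.smul_apply, smul_eq_mul, hc]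
      field_simp
      ring
    · have h1 : ω t = 0 := by
        rw [hωprod]
        exact Finset.prod_eq_zero ht (by ring)
      simp [hφ, hXzero t ht, h1]
  obtain ⟨ξ, hξI, hξ⟩ := iterated_rolle (d + 1) φ hφcd S hSsub
    (by omega) hSzero
  -- compute iterated derivative of φ
  have hsplit : iteratedDerivWithin (d + 1) φ (Set.Icc (-1 : ℝ) 1) ξ =
      iteratedDerivWithin (d + 1) g (Set.Icc (-1 : ℝ) 1) ξ - c * iteratedDerivWithin (d + 1) ω (Set.Icc (-1 : ℝ) 1) ξ := by
    rw [hφ, iteratedDerivWithin_sub hξI uD (hg' ξ hξI) (hcω ξ hξI),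
      iteratedDerivWithin_const_smul hξI uD c (hωI ξ hξI)]
    simp
  -- the (d+1)-st derivative of ω is (d+1)!
  have hpmonic : p.Monic := monic_prod_of_monic _ _ fun x _ => monic_X_sub_C x
  have hpdeg : p.natDegree = d + 1 := by
    rw [hp, Polynomial.natDegree_prod _ _ (fun x _ => X_sub_C_ne_zero x)]
    simp [hXcard]
  have hpiter : Polynomial.derivative^[d + 1] p = Polynomial.C (Nat.factorial (d + 1) : ℝ) := by
    have hdeg0 : (Polynomial.derivative^[d + 1] p).natDegree ≤ 0 := by
      have := Polynomial.natDegree_iterate_derivative p (d + 1)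
      omega
    rw [Polynomial.eq_C_of_natDegree_le_zero hdeg0]
    congr 1
    rw [Polynomial.coeff_iterate_derivative]
    simp only [Nat.zero_add]
    rw [show p.coeff (d + 1) = 1 from by
      have := hpmonic.leadingCoeff
      rwa [Polynomial.leadingCoeff, hpdeg] at this]
    rw [Nat.descFactorial_self]
    simp
  have hωiter : iteratedDerivWithin (d + 1) ω (Set.Icc (-1 : ℝ) 1) ξ = (Nat.factorial (d + 1) : ℝ) := by
    rw [hω, iteratedDerivWithin_polynomial p (d + 1) ξ hξI, hpiter]
    simp
  have hgiter : iteratedDerivWithin (d + 1) g (Set.Icc (-1 : ℝ) 1) ξ = c * (Nat.factorial (d + 1) : ℝ) := by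
    have := hsplit
    rw [hξ, hωiter] at this
    linarith
  refine ⟨ξ, hξI, ?_⟩
  rw [hgiter, abs_mul, abs_of_nonneg (by positivity : (0:ℝ) ≤ (Nat.factorial (d + 1) : ℝ))]
  have hcabs : |c| = m / |ω t₁| := by
    rw [hc, abs_div, ht₁m]
  have hωb : |ω t₁| ≤ 2 ^ (d + 1) := by
    rw [hωprod, Finset.abs_prod]
    calc ∏ x ∈ X, |t₁ - x| ≤ ∏ x ∈ X, 2 := by
          refine Finset.prod_le_prod (fun x _ => abs_nonneg _) ?_
          intro x hx
          have h1 := ht₁I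
          have h2 := hXI hx
          rw [abs_le]
          constructor <;> [linarith [h1.1, h2.2]; linarith [h1.2, h2.1]]
      _ = 2 ^ (d + 1) := by rw [Finset.prod_const, hXcard]
  have hωpos : 0 < |ω t₁| := abs_pos.2 hωt₁
  rw [hcabs]
  rw [div_mul_eq_mul_div, div_le_div_iff₀ (by positivity) hωpos]
  exact mul_le_mul_of_nonneg_left hωb (by positivity)
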